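/- Let C = (C_0, C_1, ..., C_k) be a tuple of real n×n matrices with C_0 invertible and such that C_0^{-1} C_i is a Z-matrix for every 1 ≤ i ≤ k. If C has the cone cS-W property, then for every q ∈ ℝ^n and every tuple d = (d_1, ..., d_{k-1}) of positive vectors in ℝ^n, the solution set SOL(C, d, q) of EHLCP(C, d, q) is a convex subset of (ℝ^n)^{k+1}. -/

import Mathlib

open Matrix Finset

/-- `R` is a column representative matrix of the tuple `C = (C 0, ..., C k)`:
each column of `R` is the corresponding column of some `C i`. -/
def IsColRep {n k : ℕ} (C : Fin (k+1) → Matrix (Fin n) (Fin n) ℝ)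
    (R : Matrix (Fin n) (Fin n) ℝ) : Prop :=
  ∀ j : Fin n, ∃ i : Fin (k+1), ∀ r : Fin n, R r j = C i r j

/-- The column `W`-property: all column representative matrices have determinants
that are all positive or all negative. -/
def HasColumnW {n k : ℕ} (C : Fin (k+1) → Matrix (Fin n) (Fin n) ℝ) : Prop :=
  (∀ R, IsColRep C R → 0 < R.det) ∨ (∀ R, IsColRep C R → R.det < 0)

/-- The column `W₀`-property: determinants of all column representative matrices are
all nonnegative with at least one positive, or all nonpositive with at least one negative. -/
def HasColumnW0 {n k : ℕ} (C : Fin (k+1) → Matrix (Fin n) (Fin n) ℝ) : Prop :=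
  ((∀ R, IsColRep C R → 0 ≤ R.det) ∧ (∃ R, IsColRep C R ∧ 0 < R.det)) ∨
  ((∀ R, IsColRep C R → R.det ≤ 0) ∧ (∃ R, IsColRep C R ∧ R.det < 0))

/-- The column nondegenerate-`W` (column ND-`W`) property. -/
def HasColumnNDW {n k : ℕ} (C : Fin (k+1) → Matrix (Fin n) (Fin n) ℝ) : Prop :=
  ∀ x : Fin (k+1) → Fin n → ℝ,
    C 0 *ᵥ x 0 = ∑ i : Fin k, C i.succ *ᵥ x i.succ →
    (∀ i j : Fin (k+1), i < j → x i * x j = 0) →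
    ∀ i, x i = 0

/-- The column sufficient-`W` (cS-`W`) property. -/
def HasCSW {n k : ℕ} (C : Fin (k+1) → Matrix (Fin n) (Fin n) ℝ) : Prop :=
  ∀ x : Fin (k+1) → Fin n → ℝ,
    C 0 *ᵥ x 0 = ∑ i : Fin k, C i.succ *ᵥ x i.succ →
    (∀ i : Fin k, x 0 * x i.succ ≤ 0) →
    (∀ i j : Fin k, i < j → 0 ≤ x i.succ * x j.succ) →
    ∀ i : Fin k, x i.castSucc * x i.succ = 0

/-- The cone column sufficient-`W` (cone cS-`W`) property. -/
def HasConeCSW {n k : ℕ} (C : Fin (k+1) → Matrix (Fin n) (Fin n) ℝ) : Prop :=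
  ∀ x : Fin (k+1) → Fin n → ℝ,
    C 0 *ᵥ x 0 = ∑ i : Fin k, C i.succ *ᵥ x i.succ →
    (∀ i : Fin k, 0 ≤ x i.succ) →
    (∀ i : Fin k, x 0 * x i.succ ≤ 0) →
    ∀ i : Fin k, x i.castSucc * x i.succ = 0

/-- `x = (x 0, ..., x k)` solves the extended horizontal linear complementarity
problem EHLCP(C, d, q). -/
def IsSolEHLCP {n k : ℕ} (C : Fin (k+1) → Matrix (Fin n) (Fin n) ℝ)
    (d : Fin (k-1) → Fin n → ℝ) (q : Fin n → ℝ)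
    (x : Fin (k+1) → Fin n → ℝ) : Prop :=
  C 0 *ᵥ x 0 = q + ∑ i : Fin k, C i.succ *ᵥ x i.succ ∧
  x 0 ⊓ x 1 = 0 ∧
  ∀ j : Fin (k-1),
    (d j - x ⟨j.1 + 1, by have := j.2; omega⟩) ⊓ x ⟨j.1 + 2, by have := j.2; omega⟩ = 0


lemma min_zero_facts {a b : ℝ} (h : a ⊓ b = 0) : 0 ≤ a ∧ 0 ≤ b ∧ a * b = 0 := by
  have ha : 0 ≤ a := h ▸ inf_le_left
  have hb : 0 ≤ b := h ▸ inf_le_right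
  refine ⟨ha, hb, ?_⟩
  rw [min_eq_iff] at h
  rcases h with ⟨h1, _⟩ | ⟨h1, _⟩ <;> simp [h1]

lemma min_zero_of {a b : ℝ} (h1 : 0 ≤ a) (h2 : 0 ≤ b) (h3 : a * b = 0) : a ⊓ b = 0 := by
  rw [min_eq_iff]
  rcases mul_eq_zero.mp h3 with h | h
  · exact Or.inl ⟨h, h ▸ h2⟩
  · exact Or.inr ⟨h, h ▸ h1⟩

lemma mulVec_sum' {n : ℕ} {ι : Type*} (A : Matrix (Fin n) (Fin n) ℝ) (s : Finset ι)
    (f : ι → Fin n → ℝ) : A *ᵥ (∑ i ∈ s, f i) = ∑ i ∈ s, A *ᵥ f i :=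
  map_sum A.mulVecLin f s

lemma max_sub_max (a b : ℝ) : max (a - b) 0 - max (b - a) 0 = a - b := by
  rcases le_total a b with h | h
  · rw [max_eq_right (by linarith), max_eq_left (by linarith)]; ring
  · rw [max_eq_left (by linarith), max_eq_right (by linarith)]; ring

lemma solChain {n k : ℕ} (d : Fin (k-1) → Fin n → ℝ) (hd : ∀ j r, 0 < d j r)
    (x : Fin (k+1) → Fin n → ℝ)
    (hxj : ∀ j : Fin (k-1), ∀ r : Fin n,
      (d j r - x ⟨j.1 + 1, by have := j.2; omega⟩ r) * x ⟨j.1 + 2, by have := j.2; omega⟩ r = 0)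
    (r : Fin n) :
    ∀ (m m' : ℕ) (h1 : 1 ≤ m) (h2 : m < m') (h3 : m' ≤ k),
      x ⟨m, by omega⟩ r < d ⟨m - 1, by omega⟩ r → x ⟨m', by omega⟩ r = 0 := by
  intro m m' h1 h2 h3 hlt
  revert h3
  induction m', h2 using Nat.le_induction with
  | base =>
    intro h3 hlt
    have hc := hxj ⟨m - 1, by omega⟩ r
    simp only [show m - 1 + 1 = m from by omega, show m - 1 + 2 = m + 1 from by omega] at hc
    rcases mul_eq_zero.mp hc with h | h
    · exfalso; linarith
    · exact h
  | succ m' hm ih =>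
    intro h3 hlt
    have hz := ih (by omega) hlt
    have hc := hxj ⟨m' - 1, by omega⟩ r
    simp only [show m' - 1 + 1 = m' from by omega, show m' - 1 + 2 = m' + 1 from by omega] at hc
    rw [hz] at hc
    have hdp := hd ⟨m' - 1, by omega⟩ r
    rcases mul_eq_zero.mp hc with h | h
    · exfalso; linarith
    · exact h


set_option maxHeartbeats 2000000 in
lemma cross_comp {n k : ℕ} (hk : 0 < k)
    (C : Fin (k+1) → Matrix (Fin n) (Fin n) ℝ) (h0 : IsUnit (C 0))
    (hZ : ∀ i : Fin k, ∀ r s : Fin n, r ≠ s → ((C 0)⁻¹ * C i.succ) r s ≤ 0)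
    (h : HasConeCSW C)
    (q : Fin n → ℝ) (d : Fin (k-1) → Fin n → ℝ) (hd : ∀ j, ∀ r, 0 < d j r)
    (x y : Fin (k+1) → Fin n → ℝ)
    (hx : IsSolEHLCP C d q x) (hy : IsSolEHLCP C d q y) :
    ∀ i : Fin k, ∀ r, (x i.castSucc r - y i.castSucc r) * (x i.succ r - y i.succ r) = 0 := by
  obtain ⟨hxeq, hx01, hxj⟩ := hx
  obtain ⟨hyeq, hy01, hyj⟩ := hy
  haveI : Invertible (C 0) := (C 0).invertibleOfIsUnitDet ((Matrix.isUnit_iff_isUnit_det _).mp h0)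
  -- index bookkeeping
  have e1 : (1 : Fin (k+1)) = ⟨1, by omega⟩ := by ext; simp [Fin.val_one']; omega
  have e1k : ((⟨0, hk⟩ : Fin k).succ) = (1 : Fin (k+1)) := by
    ext; simp [Fin.val_one']; exact (Nat.mod_eq_of_lt (by omega)).symm
  have e0k : ((⟨0, hk⟩ : Fin k).castSucc) = (0 : Fin (k+1)) := Fin.ext (by simp)
  -- pointwise solution facts
  have hx01' : ∀ r, 0 ≤ x 0 r ∧ 0 ≤ x 1 r ∧ x 0 r * x 1 r = 0 := fun r =>
    min_zero_facts (by simpa using congrFun hx01 r)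
  have hy01' : ∀ r, 0 ≤ y 0 r ∧ 0 ≤ y 1 r ∧ y 0 r * y 1 r = 0 := fun r =>
    min_zero_facts (by simpa using congrFun hy01 r)
  have hxj' : ∀ j : Fin (k-1), ∀ r, 0 ≤ d j r - x ⟨j.1+1, by have := j.2; omega⟩ r ∧
      0 ≤ x ⟨j.1+2, by have := j.2; omega⟩ r ∧
      (d j r - x ⟨j.1+1, by have := j.2; omega⟩ r) * x ⟨j.1+2, by have := j.2; omega⟩ r = 0 :=
    fun j r => min_zero_facts (by simpa using congrFun (hxj j) r)
  have hyj' : ∀ j : Fin (k-1), ∀ r, 0 ≤ d j r - y ⟨j.1+1, by have := j.2; omega⟩ r ∧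
      0 ≤ y ⟨j.1+2, by have := j.2; omega⟩ r ∧
      (d j r - y ⟨j.1+1, by have := j.2; omega⟩ r) * y ⟨j.1+2, by have := j.2; omega⟩ r = 0 :=
    fun j r => min_zero_facts (by simpa using congrFun (hyj j) r)
  have chx := solChain d hd x (fun j r => (hxj' j r).2.2)
  have chy := solChain d hd y (fun j r => (hyj' j r).2.2)
  -- nonnegativity of all levels
  have nnx : ∀ (m : Fin (k+1)) r, 0 ≤ x m r := by
    rintro ⟨mv, hm⟩ r
    rcases Nat.lt_or_ge mv 2 with h2 | h2
    · interval_cases mv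
      · rw [show (⟨0, hm⟩ : Fin (k+1)) = 0 from Fin.ext (by simp)]; exact (hx01' r).1
      · rw [show (⟨1, hm⟩ : Fin (k+1)) = 1 from e1.symm]; exact (hx01' r).2.1
    · have hj := (hxj' ⟨mv - 2, by omega⟩ r).2.1
      simp only [show mv - 2 + 2 = mv from by omega] at hj
      exact hj
  have nny : ∀ (m : Fin (k+1)) r, 0 ≤ y m r := by
    rintro ⟨mv, hm⟩ r
    rcases Nat.lt_or_ge mv 2 with h2 | h2
    · interval_cases mv
      · rw [show (⟨0, hm⟩ : Fin (k+1)) = 0 from Fin.ext (by simp)]; exact (hy01' r).1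
      · rw [show (⟨1, hm⟩ : Fin (k+1)) = 1 from e1.symm]; exact (hy01' r).2.1
    · have hj := (hyj' ⟨mv - 2, by omega⟩ r).2.1
      simp only [show mv - 2 + 2 = mv from by omega] at hj
      exact hj
  -- monotone sign propagation
  have mono : ∀ (r : Fin n) (a b : Fin k), a.1 < b.1 →
      0 < x a.succ r - y a.succ r → y b.succ r = 0 := by
    intro r a b hab hpos
    have ea : a.succ = (⟨a.1 + 1, by omega⟩ : Fin (k+1)) := rfl
    rw [ea] at hpos
    have hbd : x ⟨a.1+1, by omega⟩ r ≤ d ⟨a.1, by have := b.2; omega⟩ r := by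
      have := (hxj' ⟨a.1, by have := b.2; omega⟩ r).1; linarith
    refine chy r (a.1+1) (b.1+1) (by omega) (by omega) (by have := b.2; omega) ?_
    rw [show (⟨a.1+1-1, by omega⟩ : Fin (k-1)) = ⟨a.1, by have := b.2; omega⟩ from Fin.ext (by simp)]
    have hynn := nny ⟨a.1+1, by omega⟩ r
    linarith
  have mono' : ∀ (r : Fin n) (a b : Fin k), a.1 < b.1 →
      0 < y a.succ r - x a.succ r → x b.succ r = 0 := by
    intro r a b hab hpos
    have ea : a.succ = (⟨a.1 + 1, by omega⟩ : Fin (k+1)) := rfl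
    rw [ea] at hpos
    have hbd : y ⟨a.1+1, by omega⟩ r ≤ d ⟨a.1, by have := b.2; omega⟩ r := by
      have := (hyj' ⟨a.1, by have := b.2; omega⟩ r).1; linarith
    refine chx r (a.1+1) (b.1+1) (by omega) (by omega) (by have := b.2; omega) ?_
    rw [show (⟨a.1+1-1, by omega⟩ : Fin (k-1)) = ⟨a.1, by have := b.2; omega⟩ from Fin.ext (by simp)]
    have hxnn := nnx ⟨a.1+1, by omega⟩ r
    linarith
  -- same sign of differences across levels 1..k
  have hss : ∀ r, (∀ m : Fin k, 0 ≤ x m.succ r - y m.succ r) ∨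
      (∀ m : Fin k, x m.succ r - y m.succ r ≤ 0) := by
    intro r
    by_cases hall : ∀ m : Fin k, 0 ≤ x m.succ r - y m.succ r
    · exact Or.inl hall
    · push_neg at hall
      obtain ⟨m0, hm0⟩ := hall
      right
      intro m
      rcases lt_trichotomy m.1 m0.1 with hlt | heq | hgt
      · by_contra hpos
        push_neg at hpos
        have hz := mono r m m0 hlt hpos
        have := nnx m0.succ r
        linarith
      · rw [show m = m0 from Fin.ext heq]; linarith
      · have hz := mono' r m0 m hgt (by linarith)
        have := nny m.succ r
        linarith
  -- L4 : difference at level 0 opposes differences at levels ≥ 1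
  have allz_x : ∀ r, 0 < x 0 r → ∀ m : Fin k, x m.succ r = 0 := by
    intro r h0r m
    have hx1 : x 1 r = 0 := by
      rcases mul_eq_zero.mp (hx01' r).2.2 with h' | h'
      · exfalso; linarith
      · exact h'
    rcases Nat.eq_zero_or_pos m.1 with h0' | h0'
    · rw [show m.succ = (1 : Fin (k+1)) from by
        rw [show m = ⟨0, hk⟩ from Fin.ext h0']; exact e1k]
      exact hx1
    · refine chx r 1 (m.1+1) le_rfl (by omega) (by have := m.2; omega) ?_
      show x ⟨1, by omega⟩ r < d ⟨0, by have := m.2; omega⟩ r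
      rw [e1] at hx1
      have := hd ⟨0, by have := m.2; omega⟩ r
      linarith
  have allz_y : ∀ r, 0 < y 0 r → ∀ m : Fin k, y m.succ r = 0 := by
    intro r h0r m
    have hy1 : y 1 r = 0 := by
      rcases mul_eq_zero.mp (hy01' r).2.2 with h' | h'
      · exfalso; linarith
      · exact h'
    rcases Nat.eq_zero_or_pos m.1 with h0' | h0'
    · rw [show m.succ = (1 : Fin (k+1)) from by
        rw [show m = ⟨0, hk⟩ from Fin.ext h0']; exact e1k]
      exact hy1
    · refine chy r 1 (m.1+1) le_rfl (by omega) (by have := m.2; omega) ?_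
      show y ⟨1, by omega⟩ r < d ⟨0, by have := m.2; omega⟩ r
      rw [e1] at hy1
      have := hd ⟨0, by have := m.2; omega⟩ r
      linarith
  have hz0 : ∀ (r : Fin n) (m : Fin k),
      (x 0 r - y 0 r) * (x m.succ r - y m.succ r) ≤ 0 := by
    intro r m
    rcases lt_trichotomy (x 0 r - y 0 r) 0 with hneg | hzero | hpos
    · have hy0pos : 0 < y 0 r := by have := nnx 0 r; linarith
      have hyz := allz_y r hy0pos m
      have hnn : 0 ≤ x m.succ r - y m.succ r := by
        rw [hyz]; simpa using nnx m.succ r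
      exact mul_nonpos_of_nonpos_of_nonneg (le_of_lt hneg) hnn
    · rw [hzero, zero_mul]
    · have hx0pos : 0 < x 0 r := by have := nny 0 r; linarith
      have hxz := allz_x r hx0pos m
      have hnp : x m.succ r - y m.succ r ≤ 0 := by
        rw [hxz]; simpa using nny m.succ r
      exact mul_nonpos_of_nonneg_of_nonpos (le_of_lt hpos) hnp
  -- positive and negative parts
  obtain ⟨pp, hpp⟩ : ∃ pp : Fin (k+1) → Fin n → ℝ,
      ∀ m r, pp m r = max (x m r - y m r) 0 := ⟨_, fun _ _ => rfl⟩
  obtain ⟨qq, hqq⟩ : ∃ qq : Fin (k+1) → Fin n → ℝ,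
      ∀ m r, qq m r = max (y m r - x m r) 0 := ⟨_, fun _ _ => rfl⟩
  obtain ⟨u0, hu0⟩ : ∃ u : Fin n → ℝ,
      u = ∑ i : Fin k, ((C 0)⁻¹ * C i.succ) *ᵥ pp i.succ := ⟨_, rfl⟩
  obtain ⟨v0, hv0⟩ : ∃ v : Fin n → ℝ,
      v = ∑ i : Fin k, ((C 0)⁻¹ * C i.succ) *ᵥ qq i.succ := ⟨_, rfl⟩
  have hppqq : ∀ m, pp m - qq m = x m - y m := by
    intro m; funext r
    simp only [Pi.sub_apply, hpp, hqq]
    exact max_sub_max _ _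
  have heq : C 0 *ᵥ (x 0 - y 0) = ∑ i : Fin k, C i.succ *ᵥ (x i.succ - y i.succ) := by
    simp only [Matrix.mulVec_sub, hxeq, hyeq, Finset.sum_sub_distrib]
    abel
  have hCu : C 0 *ᵥ u0 = ∑ i : Fin k, C i.succ *ᵥ pp i.succ := by
    rw [hu0, mulVec_sum']
    exact Finset.sum_congr rfl fun i _ => by
      rw [Matrix.mulVec_mulVec, Matrix.mul_inv_cancel_left_of_invertible]
  have hCv : C 0 *ᵥ v0 = ∑ i : Fin k, C i.succ *ᵥ qq i.succ := by
    rw [hv0, mulVec_sum']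
    exact Finset.sum_congr rfl fun i _ => by
      rw [Matrix.mulVec_mulVec, Matrix.mul_inv_cancel_left_of_invertible]
  have huv : ∀ r, u0 r - v0 r = x 0 r - y 0 r := by
    have h1 : C 0 *ᵥ (u0 - v0) = C 0 *ᵥ (x 0 - y 0) := by
      rw [Matrix.mulVec_sub, hCu, hCv, ← Finset.sum_sub_distrib, heq]
      exact Finset.sum_congr rfl fun i _ => by rw [← Matrix.mulVec_sub, hppqq]
    have h2 : u0 - v0 = x 0 - y 0 := by
      have h3 := congrArg (fun w => (C 0)⁻¹ *ᵥ w) h1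
      simpa [Matrix.mulVec_mulVec, Matrix.inv_mul_of_invertible, Matrix.one_mulVec] using h3
    intro r
    simpa using congrFun h2 r
  -- Z-matrix sign control
  have hvZ : ∀ r, (∀ m : Fin k, qq m.succ r = 0) → v0 r ≤ 0 := by
    intro r hq
    have hv : v0 r = ∑ i : Fin k, ∑ s : Fin n, ((C 0)⁻¹ * C i.succ) r s * qq i.succ s := by
      rw [hv0]; simp [Matrix.mulVec, dotProduct, Finset.sum_apply]
    rw [hv]
    apply Finset.sum_nonpos; intro i _
    apply Finset.sum_nonpos; intro s _
    by_cases hs : s = r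
    · subst hs; rw [hq i, mul_zero]
    · exact mul_nonpos_of_nonpos_of_nonneg (hZ i r s (Ne.symm hs))
        (by rw [hqq]; exact le_max_right _ _)
  have huZ : ∀ r, (∀ m : Fin k, pp m.succ r = 0) → u0 r ≤ 0 := by
    intro r hp
    have hu : u0 r = ∑ i : Fin k, ∑ s : Fin n, ((C 0)⁻¹ * C i.succ) r s * pp i.succ s := by
      rw [hu0]; simp [Matrix.mulVec, dotProduct, Finset.sum_apply]
    rw [hu]
    apply Finset.sum_nonpos; intro i _
    apply Finset.sum_nonpos; intro s _
    by_cases hs : s = r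
    · subst hs; rw [hp i, mul_zero]
    · exact mul_nonpos_of_nonpos_of_nonneg (hZ i r s (Ne.symm hs))
        (by rw [hpp]; exact le_max_right _ _)
  -- apply the cone cS-W property to the positive parts
  obtain ⟨T1, hT10, hT1s⟩ : ∃ T : Fin (k+1) → Fin n → ℝ,
      T 0 = u0 ∧ ∀ i : Fin k, T i.succ = pp i.succ :=
    ⟨Fin.cases u0 (fun i => pp i.succ), by simp, fun i => by simp⟩
  obtain ⟨T2, hT20, hT2s⟩ : ∃ T : Fin (k+1) → Fin n → ℝ,
      T 0 = v0 ∧ ∀ i : Fin k, T i.succ = qq i.succ :=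
    ⟨Fin.cases v0 (fun i => qq i.succ), by simp, fun i => by simp⟩
  have hc1 : ∀ i : Fin k, T1 i.castSucc * T1 i.succ = 0 := by
    apply h T1
    · rw [hT10, hCu]; exact Finset.sum_congr rfl fun i _ => by rw [hT1s]
    · intro i
      rw [hT1s, Pi.le_def]
      intro r
      simp only [Pi.zero_apply, hpp]
      exact le_max_right _ _
    · intro i
      rw [hT10, hT1s, Pi.le_def]
      intro r
      simp only [Pi.mul_apply, Pi.zero_apply]
      by_cases hzero : pp i.succ r = 0
      · rw [hzero, mul_zero]
      · have hppnn : 0 ≤ pp i.succ r := by rw [hpp]; exact le_max_right _ _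
        have hzpos : 0 < x i.succ r - y i.succ r := by
          rcases lt_or_ge 0 (x i.succ r - y i.succ r) with h' | h'
          · exact h'
          · exact absurd (by rw [hpp]; exact max_eq_right h') hzero
        have hallnn : ∀ m : Fin k, 0 ≤ x m.succ r - y m.succ r := by
          rcases hss r with h' | h'
          · exact h'
          · exfalso; have := h' i; linarith
        have hq0 : ∀ m : Fin k, qq m.succ r = 0 := fun m => by
          rw [hqq]; exact max_eq_right (by linarith [hallnn m])
        have hv0r := hvZ r hq0
        have hz0r : x 0 r - y 0 r ≤ 0 := by nlinarith [hz0 r i]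
        have hu0r : u0 r ≤ 0 := by have := huv r; linarith
        exact mul_nonpos_of_nonpos_of_nonneg hu0r hppnn
  have hc2 : ∀ i : Fin k, T2 i.castSucc * T2 i.succ = 0 := by
    apply h T2
    · rw [hT20, hCv]; exact Finset.sum_congr rfl fun i _ => by rw [hT2s]
    · intro i
      rw [hT2s, Pi.le_def]
      intro r
      simp only [Pi.zero_apply, hqq]
      exact le_max_right _ _
    · intro i
      rw [hT20, hT2s, Pi.le_def]
      intro r
      simp only [Pi.mul_apply, Pi.zero_apply]
      by_cases hzero : qq i.succ r = 0
      · rw [hzero, mul_zero]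
      · have hqqnn : 0 ≤ qq i.succ r := by rw [hqq]; exact le_max_right _ _
        have hzneg : x i.succ r - y i.succ r < 0 := by
          rcases lt_or_ge (x i.succ r - y i.succ r) 0 with h' | h'
          · exact h'
          · exact absurd (by rw [hqq]; exact max_eq_right (by linarith)) hzero
        have hallnp : ∀ m : Fin k, x m.succ r - y m.succ r ≤ 0 := by
          rcases hss r with h' | h'
          · exfalso; have := h' i; linarith
          · exact h'
        have hp0 : ∀ m : Fin k, pp m.succ r = 0 := fun m => by
          rw [hpp]; exact max_eq_right (hallnp m)
        have hu0r := huZ r hp0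
        have hz0r : 0 ≤ x 0 r - y 0 r := by nlinarith [hz0 r i]
        have hv0r : v0 r ≤ 0 := by have := huv r; linarith
        exact mul_nonpos_of_nonpos_of_nonneg hv0r hqqnn
  -- extract the conclusions
  have hup1 : ∀ r, u0 r * pp 1 r = 0 := by
    intro r
    have hcc := hc1 ⟨0, hk⟩
    rw [e0k, hT10, hT1s] at hcc
    rw [e1k] at hcc
    simpa using congrFun hcc r
  have hvq1 : ∀ r, v0 r * qq 1 r = 0 := by
    intro r
    have hcc := hc2 ⟨0, hk⟩
    rw [e0k, hT20, hT2s] at hcc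
    rw [e1k] at hcc
    simpa using congrFun hcc r
  have hppc : ∀ i : Fin k, 0 < i.1 → pp i.castSucc * pp i.succ = 0 := by
    intro i hipos
    have ecast : i.castSucc = (⟨i.1 - 1, by omega⟩ : Fin k).succ := Fin.ext (by simp; omega)
    have hcc := hc1 i
    rw [ecast, hT1s, hT1s, ← ecast] at hcc
    exact hcc
  have hqqc : ∀ i : Fin k, 0 < i.1 → qq i.castSucc * qq i.succ = 0 := by
    intro i hipos
    have ecast : i.castSucc = (⟨i.1 - 1, by omega⟩ : Fin k).succ := Fin.ext (by simp; omega)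
    have hcc := hc2 i
    rw [ecast, hT2s, hT2s, ← ecast] at hcc
    exact hcc
  -- conclude
  intro i r
  rcases Nat.eq_zero_or_pos i.1 with hi0 | hipos
  · rw [show i = ⟨0, hk⟩ from Fin.ext hi0, e0k, e1k]
    rcases lt_trichotomy (x 1 r - y 1 r) 0 with hneg | hzr | hpos
    · have hq1pos : 0 < qq 1 r := by rw [hqq, max_eq_left (by linarith)]; linarith
      have hv0r : v0 r = 0 := by
        rcases mul_eq_zero.mp (hvq1 r) with h' | h'
        · exact h'
        · exact absurd h' (ne_of_gt hq1pos)
      have hallnp : ∀ m : Fin k, x m.succ r - y m.succ r ≤ 0 := by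
        rcases hss r with h' | h'
        · exfalso; have := h' ⟨0, hk⟩; rw [e1k] at this; linarith
        · exact h'
      have hp0 : ∀ m : Fin k, pp m.succ r = 0 := fun m => by
        rw [hpp]; exact max_eq_right (hallnp m)
      have hu0r := huZ r hp0
      have hz0ge : 0 ≤ x 0 r - y 0 r := by
        have hh := hz0 r ⟨0, hk⟩; rw [e1k] at hh; nlinarith
      have hz00 : x 0 r - y 0 r = 0 := by have h2 := huv r; linarith
      rw [hz00, zero_mul]
    · rw [hzr, mul_zero]
    · have hp1 : pp 1 r = x 1 r - y 1 r := by rw [hpp]; exact max_eq_left (by linarith)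
      have hu0r : u0 r = 0 := by
        rcases mul_eq_zero.mp (hup1 r) with h' | h'
        · exact h'
        · exfalso; rw [hp1] at h'; linarith
      have hallnn : ∀ m : Fin k, 0 ≤ x m.succ r - y m.succ r := by
        rcases hss r with h' | h'
        · exact h'
        · exfalso; have := h' ⟨0, hk⟩; rw [e1k] at this; linarith
      have hq0 : ∀ m : Fin k, qq m.succ r = 0 := fun m => by
        rw [hqq]; exact max_eq_right (by linarith [hallnn m])
      have hv0r := hvZ r hq0
      have hz0le : x 0 r - y 0 r ≤ 0 := by
        have hh := hz0 r ⟨0, hk⟩; rw [e1k] at hh; nlinarith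
      have hz00 : x 0 r - y 0 r = 0 := by have h2 := huv r; linarith
      rw [hz00, zero_mul]
  · have ecast : i.castSucc = (⟨i.1 - 1, by omega⟩ : Fin k).succ := Fin.ext (by simp; omega)
    rcases hss r with hall | hall
    · have h1 : 0 ≤ x i.castSucc r - y i.castSucc r := by rw [ecast]; exact hall _
      have h2 : 0 ≤ x i.succ r - y i.succ r := hall i
      have hcf := congrFun (hppc i hipos) r
      simp only [Pi.mul_apply, Pi.zero_apply] at hcf
      rw [hpp, hpp, max_eq_left h1, max_eq_left h2] at hcf
      exact hcf
    · have h1 : x i.castSucc r - y i.castSucc r ≤ 0 := by rw [ecast]; exact hall _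
      have h2 : x i.succ r - y i.succ r ≤ 0 := hall i
      have hcf := congrFun (hqqc i hipos) r
      simp only [Pi.mul_apply, Pi.zero_apply] at hcf
      rw [hqq, hqq, max_eq_left (by linarith), max_eq_left (by linarith)] at hcf
      nlinarith [hcf]

set_option maxHeartbeats 2000000 in
/-- if `C_0` is invertible, every `C_0⁻¹ C_i` (`1 ≤ i ≤ k`) is a
`Z`-matrix, and `C` has the cone cS-`W` property, then the solution set of
EHLCP(C, d, q) is convex for every `q` and every tuple of positive vectors `d`. -/
theorem coneCSW_implies_convex_solution_set {n k : ℕ} (hk : 0 < k)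
    (C : Fin (k+1) → Matrix (Fin n) (Fin n) ℝ) (h0 : IsUnit (C 0))
    (hZ : ∀ i : Fin k, ∀ r s : Fin n, r ≠ s → ((C 0)⁻¹ * C i.succ) r s ≤ 0)
    (h : HasConeCSW C) :
    ∀ (q : Fin n → ℝ) (d : Fin (k-1) → Fin n → ℝ), (∀ j, ∀ r, 0 < d j r) →
      Convex ℝ {x : Fin (k+1) → Fin n → ℝ | IsSolEHLCP C d q x} := by
  intro q d hd
  intro x hx y hy a b ha hb hab
  simp only [Set.mem_setOf_eq] at hx hy ⊢
  have key := cross_comp hk C h0 hZ h q d hd x y hx hy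
  obtain ⟨hxeq, hx01, hxj⟩ := hx
  obtain ⟨hyeq, hy01, hyj⟩ := hy
  have e1k : ((⟨0, hk⟩ : Fin k).succ) = (1 : Fin (k+1)) := by
    ext; simp [Fin.val_one']; exact (Nat.mod_eq_of_lt (by omega)).symm
  have e0k : ((⟨0, hk⟩ : Fin k).castSucc) = (0 : Fin (k+1)) := Fin.ext (by simp)
  have hx01' : ∀ r, 0 ≤ x 0 r ∧ 0 ≤ x 1 r ∧ x 0 r * x 1 r = 0 := fun r =>
    min_zero_facts (by simpa using congrFun hx01 r)
  have hy01' : ∀ r, 0 ≤ y 0 r ∧ 0 ≤ y 1 r ∧ y 0 r * y 1 r = 0 := fun r =>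
    min_zero_facts (by simpa using congrFun hy01 r)
  have hxj' : ∀ j : Fin (k-1), ∀ r, 0 ≤ d j r - x ⟨j.1+1, by have := j.2; omega⟩ r ∧
      0 ≤ x ⟨j.1+2, by have := j.2; omega⟩ r ∧
      (d j r - x ⟨j.1+1, by have := j.2; omega⟩ r) * x ⟨j.1+2, by have := j.2; omega⟩ r = 0 :=
    fun j r => min_zero_facts (by simpa using congrFun (hxj j) r)
  have hyj' : ∀ j : Fin (k-1), ∀ r, 0 ≤ d j r - y ⟨j.1+1, by have := j.2; omega⟩ r ∧
      0 ≤ y ⟨j.1+2, by have := j.2; omega⟩ r ∧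
      (d j r - y ⟨j.1+1, by have := j.2; omega⟩ r) * y ⟨j.1+2, by have := j.2; omega⟩ r = 0 :=
    fun j r => min_zero_facts (by simpa using congrFun (hyj j) r)
  refine ⟨?_, ?_, ?_⟩
  · -- the linear equation
    have h00 : (a • x + b • y) 0 = a • x 0 + b • y 0 := rfl
    rw [h00, Matrix.mulVec_add, Matrix.mulVec_smul, Matrix.mulVec_smul, hxeq, hyeq]
    have hsum : ∑ i : Fin k, C i.succ *ᵥ (a • x + b • y) i.succ
        = a • ∑ i : Fin k, C i.succ *ᵥ x i.succ + b • ∑ i : Fin k, C i.succ *ᵥ y i.succ := by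
      rw [Finset.smul_sum, Finset.smul_sum, ← Finset.sum_add_distrib]
      exact Finset.sum_congr rfl fun i _ => by
        rw [show (a • x + b • y) i.succ = a • x i.succ + b • y i.succ from rfl,
          Matrix.mulVec_add, Matrix.mulVec_smul, Matrix.mulVec_smul]
    rw [hsum]
    funext r
    simp only [Pi.add_apply, Pi.smul_apply, smul_eq_mul]
    linear_combination (q r) * hab
  · -- complementarity at level 0
    funext r
    simp only [Pi.inf_apply, Pi.add_apply, Pi.smul_apply, smul_eq_mul, Pi.zero_apply]
    have hkey := key ⟨0, hk⟩ r
    rw [e0k, e1k] at hkey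
    have hx' := hx01' r
    have hy' := hy01' r
    have hcross1 : x 0 r * y 1 r = 0 := by
      nlinarith [hkey, hx'.2.2, hy'.2.2, mul_nonneg hx'.1 hy'.2.1, mul_nonneg hy'.1 hx'.2.1]
    have hcross2 : y 0 r * x 1 r = 0 := by
      nlinarith [hkey, hx'.2.2, hy'.2.2, mul_nonneg hx'.1 hy'.2.1, mul_nonneg hy'.1 hx'.2.1]
    apply min_zero_of
    · have h1 := mul_nonneg ha hx'.1
      have h2 := mul_nonneg hb hy'.1
      linarith
    · have h1 := mul_nonneg ha hx'.2.1
      have h2 := mul_nonneg hb hy'.2.1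
      linarith
    · linear_combination a^2 * hx'.2.2 + b^2 * hy'.2.2 + (a*b) * hcross1 + (a*b) * hcross2
  · -- complementarity at the higher levels
    intro j
    funext r
    simp only [Pi.inf_apply, Pi.sub_apply, Pi.add_apply, Pi.smul_apply, smul_eq_mul,
      Pi.zero_apply]
    have hxf := hxj' j r
    have hyf := hyj' j r
    have hkey : (x ⟨j.1+1, by have := j.2; omega⟩ r - y ⟨j.1+1, by have := j.2; omega⟩ r) *
        (x ⟨j.1+2, by have := j.2; omega⟩ r - y ⟨j.1+2, by have := j.2; omega⟩ r) = 0 :=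
      key ⟨j.1+1, by have := j.2; omega⟩ r
    have hcross1 : (d j r - x ⟨j.1+1, by have := j.2; omega⟩ r) *
        y ⟨j.1+2, by have := j.2; omega⟩ r = 0 := by
      nlinarith [hkey, hxf.2.2, hyf.2.2, mul_nonneg hxf.1 hyf.2.1, mul_nonneg hyf.1 hxf.2.1]
    have hcross2 : (d j r - y ⟨j.1+1, by have := j.2; omega⟩ r) *
        x ⟨j.1+2, by have := j.2; omega⟩ r = 0 := by
      nlinarith [hkey, hxf.2.2, hyf.2.2, mul_nonneg hxf.1 hyf.2.1, mul_nonneg hyf.1 hxf.2.1]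
    apply min_zero_of
    · have h1 := mul_nonneg ha hxf.1
      have h2 := mul_nonneg hb hyf.1
      have hd1 : a * d j r + b * d j r = d j r := by linear_combination (d j r) * hab
      linarith
    · have h1 := mul_nonneg ha hxf.2.1
      have h2 := mul_nonneg hb hyf.2.1
      linarith
    · linear_combination a^2 * hxf.2.2 + b^2 * hyf.2.2 + (a*b) * hcross1 + (a*b) * hcross2 +
        (- (d j r) * (a * x ⟨j.1+2, by have := j.2; omega⟩ r +
          b * y ⟨j.1+2, by have := j.2; omega⟩ r)) * hab
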